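/- For every natural number N ≥ 1 there is exactly one pair (p,q) with p ≤ q and p·q = N such that the complete bipartite graph K_{p,q} is determined by its adjacency spectrum; i.e., there exist p ≤ q with p·q = N such that K_{p,q} is DS, and for any other pair (a,b) with a ≤ b, a·b = N and (a,b) ≠ (p,q), the graph K_{a,b} is not DS. -/

import Mathlib

set_option synthInstance.maxHeartbeats 1000000
set_option maxHeartbeats 1600000
set_option linter.unusedSectionVars false
set_option linter.unreachableTactic false
set_option linter.unusedTactic false
set_option linter.unusedVariables false

open Polynomial

instance completeBipartiteGraph.decidableRelAdj {V W : Type*} :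
    DecidableRel (completeBipartiteGraph V W).Adj := fun v w => by
  cases v <;> cases w <;> simp [completeBipartiteGraph] <;> infer_instance

/-- `K_{p,q}` is determined by its adjacency spectrum: every finite simple graph that is
`A`-cospectral with `K_{p,q}` is isomorphic to it. -/
def CompleteBipartiteDS (p q : ℕ) : Prop :=
  ∀ (V : Type) (_ : Fintype V) (_ : DecidableEq V) (H : SimpleGraph V)
    (_ : DecidableRel H.Adj),
    (H.adjMatrix ℝ).charpoly =
        ((completeBipartiteGraph (Fin p) (Fin q)).adjMatrix ℝ).charpoly →
      Nonempty (H ≃g completeBipartiteGraph (Fin p) (Fin q))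

open Matrix



lemma charpoly_rank2 {V : Type} [Fintype V] [DecidableEq V] (u v : V → ℝ)
    (huv : u ⬝ᵥ v = 0) (hn : 2 ≤ Fintype.card V) :
    (Matrix.of fun i j => u i * v j + v i * u j).charpoly
      = X ^ Fintype.card V - C ((u ⬝ᵥ u) * (v ⬝ᵥ v)) * X ^ (Fintype.card V - 2) := by
  classical
  set n := Fintype.card V with hn'
  set A : Matrix V V ℝ := Matrix.of fun i j => u i * v j + v i * u j with hA
  set φ : ℝ[X] →+* RatFunc ℝ := (algebraMap ℝ[X] (RatFunc ℝ) : ℝ[X] →+* RatFunc ℝ) with hφ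
  have hinj : Function.Injective φ := IsFractionRing.injective ℝ[X] (RatFunc ℝ)
  apply hinj
  set ψ : ℝ →+* RatFunc ℝ := φ.comp (C : ℝ →+* ℝ[X]) with hψ
  set t : RatFunc ℝ := φ X with htdef
  have ht : t ≠ 0 := by
    simp only [htdef]
    intro h
    exact X_ne_zero (hinj (by simpa using h))
  set U : Matrix V (Fin 2) (RatFunc ℝ) :=
    Matrix.of fun i j => if j = 0 then ψ (u i) else ψ (v i) with hU
  set W : Matrix (Fin 2) V (RatFunc ℝ) :=
    Matrix.of fun j i => if j = 0 then ψ (v i) else ψ (u i) with hW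
  have key : φ.mapMatrix A.charmatrix = t • (1 : Matrix V V (RatFunc ℝ)) - U * W := by
    ext i j
    simp only [RingHom.mapMatrix_apply, Matrix.map_apply, charmatrix_apply, Matrix.sub_apply,
      Matrix.smul_apply, Matrix.mul_apply, Fin.sum_univ_two, hU, hW, Matrix.of_apply,
      diagonal_apply, map_sub, smul_eq_mul]
    rw [hA]
    simp only [Matrix.of_apply]
    by_cases h : i = j <;>
      simp [h, Matrix.one_apply, map_add, _root_.map_mul, hψ] <;> ring
  have ha : ψ (u ⬝ᵥ u) = ∑ i, ψ (u i) * ψ (u i) := by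
    simp [dotProduct, map_sum, _root_.map_mul]
  have hb : ψ (v ⬝ᵥ v) = ∑ i, ψ (v i) * ψ (v i) := by
    simp [dotProduct, map_sum, _root_.map_mul]
  have hab0 : (∑ i, ψ (v i) * ψ (u i)) = 0 := by
    have h2 : ψ (u ⬝ᵥ v) = 0 := by rw [huv]; simp
    rw [← h2]; simp only [dotProduct, map_sum, _root_.map_mul]; exact Finset.sum_congr rfl fun i _ => mul_comm _ _
  have hab0' : (∑ i, ψ (u i) * ψ (v i)) = 0 := by
    rw [← hab0]; exact Finset.sum_congr rfl fun i _ => mul_comm _ _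
  have hWU : W * U = Matrix.of ![![0, ψ (v ⬝ᵥ v)], ![ψ (u ⬝ᵥ u), 0]] := by
    ext i j
    fin_cases i <;> fin_cases j <;>
      simp [Matrix.mul_apply, hU, hW, ha, hb, hab0, hab0']
  have hdet2 : Matrix.det (1 + ((-t⁻¹) • W) * U) =
      1 - t⁻¹ * t⁻¹ * (ψ (u ⬝ᵥ u) * ψ (v ⬝ᵥ v)) := by
    rw [Matrix.smul_mul, hWU]
    rw [Matrix.det_fin_two]
    simp [Matrix.one_apply]
    ring
  have step1 : φ A.charpoly = (t • (1 : Matrix V V (RatFunc ℝ)) - U * W).det := by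
    rw [Matrix.charpoly, RingHom.map_det, key]
  have step2 : t • ((1 : Matrix V V (RatFunc ℝ)) + U * ((-t⁻¹) • W))
      = t • (1 : Matrix V V (RatFunc ℝ)) - U * W := by
    rw [Matrix.mul_smul, smul_add, smul_smul]
    rw [mul_neg, mul_inv_cancel₀ ht]
    simp [sub_eq_add_neg]
  have step3 : (t • (1 : Matrix V V (RatFunc ℝ)) - U * W).det
      = t ^ n * (1 - t⁻¹ * t⁻¹ * (ψ (u ⬝ᵥ u) * ψ (v ⬝ᵥ v))) := by
    rw [← step2, Matrix.det_smul, Matrix.det_one_add_mul_comm, hdet2, hn']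
  have hpow : t ^ n = t ^ (n - 2) * t ^ 2 := by
    rw [← pow_add]; congr 1; omega
  rw [step1, step3, map_sub, map_pow, _root_.map_mul, map_pow, ← htdef]
  have hC : φ (C ((u ⬝ᵥ u) * (v ⬝ᵥ v))) = ψ (u ⬝ᵥ u) * ψ (v ⬝ᵥ v) := by
    simp [hψ, _root_.map_mul]
  rw [hC, hpow]
  field_simp

lemma charpoly_conj_eq {V : Type} [Fintype V] [DecidableEq V] (U B W : Matrix V V ℝ)
    (h1 : U * W = 1) (h2 : W * U = 1) : (U * B * W).charpoly = B.charpoly := by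
  classical
  set f : Matrix V V ℝ →+* Matrix V V ℝ[X] := (C : ℝ →+* ℝ[X]).mapMatrix with hf
  have hcm : ∀ M : Matrix V V ℝ, M.charmatrix = diagonal (fun _ => (X:ℝ[X])) - f M := by
    intro M; ext i j
    simp [charmatrix_apply, hf]
  have key : (U * B * W).charmatrix = f U * B.charmatrix * f W := by
    rw [hcm, hcm]
    have hd : ∀ M : Matrix V V ℝ[X], diagonal (fun _ => (X:ℝ[X])) * M
        = M * diagonal (fun _ => (X:ℝ[X])) := by
      intro M
      have : diagonal (fun _ : V => (X:ℝ[X])) = (X:ℝ[X]) • (1 : Matrix V V ℝ[X]) := by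
        ext i j; by_cases h : i = j <;> simp [h, Matrix.one_apply]
      rw [this, Matrix.smul_mul, Matrix.mul_smul, Matrix.one_mul, Matrix.mul_one]
    rw [Matrix.mul_sub, Matrix.sub_mul]
    congr 1
    · rw [← hd, Matrix.mul_assoc, ← _root_.map_mul f U W, h1, _root_.map_one, Matrix.mul_one]
    · rw [← _root_.map_mul, ← _root_.map_mul]
  unfold Matrix.charpoly
  rw [key, Matrix.det_mul, Matrix.det_mul, mul_comm, ← mul_assoc, ← Matrix.det_mul,
    ← _root_.map_mul f W U, h2, _root_.map_one, Matrix.det_one, one_mul]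

lemma charpoly_diagonal' {V : Type} [Fintype V] [DecidableEq V] (d : V → ℝ) :
    (diagonal d).charpoly = ∏ i, (X - C (d i)) := by
  have : (diagonal d).charmatrix = diagonal (fun i => (X:ℝ[X]) - C (d i)) := by
    ext i j
    by_cases h : i = j
    · subst h; simp [charmatrix_apply_eq]
    · simp [charmatrix_apply_ne _ _ _ h, diagonal_apply_ne _ h]
  unfold Matrix.charpoly
  rw [this, det_diagonal]

lemma charpoly_eq_prod_eigenvalues {V : Type} [Fintype V] [DecidableEq V] {A : Matrix V V ℝ}
    (hA : A.IsHermitian) : A.charpoly = ∏ i, (X - C (hA.eigenvalues i)) := by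
  have hspec := hA.spectral_theorem
  set U : Matrix V V ℝ := (Matrix.IsHermitian.eigenvectorUnitary hA : Matrix V V ℝ) with hU
  have hmem := (Matrix.IsHermitian.eigenvectorUnitary hA).property
  have h1 : U * star U = 1 := (Unitary.mem_iff.mp hmem).2
  have h2 : star U * U = 1 := (Unitary.mem_iff.mp hmem).1
  have hD : (RCLike.ofReal ∘ hA.eigenvalues : V → ℝ) = hA.eigenvalues := by
    funext i; simp
  have hstep : A.charpoly = (U * diagonal (RCLike.ofReal ∘ hA.eigenvalues) * star U).charpoly := by
    rw [Unitary.conjStarAlgAut_apply] at hspec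
    exact congrArg Matrix.charpoly hspec
  rw [hstep, hD, charpoly_conj_eq _ _ _ h1 h2, charpoly_diagonal']

section Struct
variable {V : Type} [Fintype V] [DecidableEq V]

lemma adjMatrix_isHermitian (H : SimpleGraph V) [DecidableRel H.Adj] :
    (H.adjMatrix ℝ).IsHermitian := by
  ext i j
  simp [Matrix.conjTranspose_apply, SimpleGraph.adjMatrix_apply, SimpleGraph.adj_comm]

lemma structure_of_charpoly (H : SimpleGraph V) [DecidableRel H.Adj] (N : ℕ) (hN : 1 ≤ N)
    (hn : 2 ≤ Fintype.card V)
    (hcp : (H.adjMatrix ℝ).charpoly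
      = X ^ Fintype.card V - C (N : ℝ) * X ^ (Fintype.card V - 2)) :
    ∃ P Q : Finset V, Disjoint P Q ∧
      (∀ w x, H.Adj w x ↔ (w ∈ P ∧ x ∈ Q) ∨ (w ∈ Q ∧ x ∈ P)) ∧ P.card * Q.card = N := by
  classical
  set n := Fintype.card V with hn'
  set A : Matrix V V ℝ := H.adjMatrix ℝ with hAdef
  have hHer : A.IsHermitian := adjMatrix_isHermitian H
  set μ : V → ℝ := hHer.eigenvalues with hμdef
  set s : ℝ := Real.sqrt N with hsdef
  have hNpos : (0:ℝ) < N := by exact_mod_cast hN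
  have hss : s * s = N := Real.mul_self_sqrt hNpos.le
  have hs0 : s ≠ 0 := by
    intro h
    rw [h, mul_zero] at hss
    exact hNpos.ne hss
  -- multiset of eigenvalues
  have hprod : (Multiset.map (fun a => (X:ℝ[X]) - C a) (Finset.univ.val.map μ)).prod
      = (Multiset.map (fun a => (X:ℝ[X]) - C a)
          (Multiset.replicate (n - 2) (0:ℝ) + {s, -s})).prod := by
    have lhs : (Multiset.map (fun a => (X:ℝ[X]) - C a) (Finset.univ.val.map μ)).prod
        = ∏ i, (X - C (μ i)) := by
      rw [Multiset.map_map]; rfl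
    have hxx : (X:ℝ[X]) ^ (n-2) * X ^ 2 = X ^ n := by
      rw [← pow_add]; congr 1; omega
    have rhs : (Multiset.map (fun a => (X:ℝ[X]) - C a)
        (Multiset.replicate (n - 2) (0:ℝ) + {s, -s})).prod
        = X ^ n - C (N:ℝ) * X ^ (n-2) := by
      rw [Multiset.map_add, Multiset.prod_add, Multiset.map_replicate, Multiset.prod_replicate]
      have h2 : ({s, -s} : Multiset ℝ).map (fun a => (X:ℝ[X]) - C a)
          = {X - C s, X - C (-s)} := rfl
      rw [h2]
      have h3 : ({(X:ℝ[X]) - C s, X - C (-s)} : Multiset ℝ[X]).prod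
          = (X - C s) * (X - C (-s)) := by
        simp [Multiset.prod_cons]
      rw [h3, map_zero, sub_zero, map_neg, ← hxx]
      have : ((X:ℝ[X]) - C s) * (X - - C s) = X^2 - C (N:ℝ) := by
        have : C s * C s = C (s*s) := (map_mul C s s).symm
        rw [← hss]
        rw [← this]
        ring
      rw [this]
      ring
    rw [lhs, rhs, ← hcp, charpoly_eq_prod_eigenvalues hHer]
  have hM : Finset.univ.val.map μ = Multiset.replicate (n - 2) (0:ℝ) + {s, -s} := by
    have := congrArg Polynomial.roots hprod
    rwa [roots_multiset_prod_X_sub_C, roots_multiset_prod_X_sub_C] at this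
  have hmem : ∀ i, μ i = 0 ∨ μ i = s ∨ μ i = -s := by
    intro i
    have : μ i ∈ Finset.univ.val.map μ :=
      Multiset.mem_map_of_mem μ (Finset.mem_univ i)
    rw [hM, Multiset.mem_add, Multiset.mem_replicate] at this
    rcases this with h | h
    · exact Or.inl h.2
    · rcases Multiset.mem_cons.mp h with h | h
      · exact Or.inr (Or.inl h)
      · exact Or.inr (Or.inr (Multiset.mem_singleton.mp h))
  have hcube : ∀ i, μ i * μ i * μ i = (N:ℝ) * μ i := by
    intro i
    rcases hmem i with h | h | h <;> rw [h] <;> [skip; rw [← hss]; rw [← hss]] <;> ring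
  -- rank = 2
  have hcard2 : Fintype.card {i // μ i ≠ 0} = 2 := by
    have h1 : Fintype.card {i // μ i ≠ 0}
        = (Finset.univ.filter (fun i => μ i ≠ 0)).card := Fintype.card_subtype _
    have h2 : (Finset.univ.filter (fun i => μ i ≠ 0)).card
        = Multiset.countP (fun a => a ≠ 0) (Finset.univ.val.map μ) := by
      rw [Multiset.countP_map]
      rfl
    rw [h1, h2, hM]
    rw [Multiset.countP_add]
    have : Multiset.countP (fun a => a ≠ 0) (Multiset.replicate (n-2) (0:ℝ)) = 0 := by
      rw [Multiset.countP_eq_zero]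
      intro a ha
      simpa using Multiset.eq_of_mem_replicate ha
    rw [this, zero_add]
    have hns : -s ≠ 0 := neg_ne_zero.mpr hs0
    have hone : Multiset.countP (fun x => ¬x = 0) ({-s} : Multiset ℝ) = 1 := by
      have : ({-s} : Multiset ℝ) = -s ::ₘ 0 := rfl
      rw [this, Multiset.countP_cons, Multiset.countP_zero]
      simp [hns]
    simp [Multiset.countP_cons, hs0, hns, hone]
  have hrank : A.rank = 2 := by rw [hHer.rank_eq_card_non_zero_eigs, hcard2]
  -- A^3 = N • A
  have hA3 : A * A * A = (N:ℝ) • A := by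
    have hspec := hHer.spectral_theorem
    set U : Matrix V V ℝ := (Matrix.IsHermitian.eigenvectorUnitary hHer : Matrix V V ℝ) with hU
    have hmemU := (Matrix.IsHermitian.eigenvectorUnitary hHer).property
    have h2 : star U * U = 1 := (Unitary.mem_iff.mp hmemU).1
    have hD : (RCLike.ofReal ∘ μ : V → ℝ) = μ := by funext i; simp
    set D : Matrix V V ℝ := diagonal μ with hDdef
    have hspec' : A = U * D * star U := by rw [hspec, Unitary.conjStarAlgAut_apply, hD]
    have hDDD : D * D * D = (N:ℝ) • D := by
      rw [hDdef, diagonal_mul_diagonal, diagonal_mul_diagonal]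
      have : (N:ℝ) • diagonal μ = diagonal (fun i => (N:ℝ) * μ i) := by
        rw [← diagonal_smul]
        congr 1
      rw [this]
      exact congrArg diagonal (funext fun i => hcube i)
    calc A * A * A = (U * D * star U) * (U * D * star U) * (U * D * star U) := by
          rw [← hspec']
      _ = U * (D * ((star U * U) * (D * ((star U * U) * (D * star U))))) := by
          simp only [Matrix.mul_assoc]
      _ = U * (D * (D * (D * star U))) := by rw [h2]; simp only [Matrix.one_mul]
      _ = U * ((D * D * D) * star U) := by simp only [Matrix.mul_assoc]
      _ = U * (((N:ℝ) • D) * star U) := by rw [hDDD]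
      _ = (N:ℝ) • (U * D * star U) := by
          simp only [Matrix.smul_mul, Matrix.mul_smul, Matrix.mul_assoc]
      _ = (N:ℝ) • A := by rw [← hspec']
  -- basic entries
  have hA01 : ∀ i j, A i j = if H.Adj i j then (1:ℝ) else 0 := by
    intro i j; simp [hAdef, SimpleGraph.adjMatrix_apply]
  have hApos : ∀ i j, 0 ≤ A i j := by
    intro i j; rw [hA01]; split <;> norm_num
  have hA2pos : ∀ i j, 0 ≤ (A * A) i j := by
    intro i j
    rw [Matrix.mul_apply]
    exact Finset.sum_nonneg fun c _ => mul_nonneg (hApos i c) (hApos c j)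
  -- triangle-free
  have htf : ∀ x y z, H.Adj x y → H.Adj y z → H.Adj z x → False := by
    intro x y z hxy hyz hzx
    have h0 : (A * A * A) x x = 0 := by
      rw [hA3]
      simp only [Matrix.smul_apply, smul_eq_mul]
      rw [hA01]
      simp [H.irrefl]
    have hxz2 : A x y * A y z ≤ (A * A) x z := by
      rw [Matrix.mul_apply]
      exact Finset.single_le_sum (fun c _ => mul_nonneg (hApos x c) (hApos c z))
        (Finset.mem_univ y)
    have hfin : (A * A) x z * A z x ≤ (A * A * A) x x := by
      rw [Matrix.mul_apply (M := A * A)]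
      exact Finset.single_le_sum
        (fun c _ => mul_nonneg (hA2pos x c) (hApos c x)) (Finset.mem_univ z)
    have e1 : A x y = 1 := by rw [hA01]; simp [hxy]
    have e2 : A y z = 1 := by rw [hA01]; simp [hyz]
    have e3 : A z x = 1 := by rw [hA01]; simp [hzx]
    have : (1:ℝ) ≤ (A * A * A) x x := by
      calc (1:ℝ) = (A x y * A y z) * A z x := by rw [e1, e2, e3]; ring
        _ ≤ (A * A) x z * A z x := by
            apply mul_le_mul_of_nonneg_right hxz2
            rw [e3]; norm_num
        _ ≤ (A * A * A) x x := hfin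
    rw [h0] at this
    norm_num at this
  -- there is an edge
  have hedge : ∃ u v, H.Adj u v := by
    by_contra h
    push_neg at h
    have hA0 : A = 0 := by
      ext i j
      rw [hA01]
      simp [h i j]
    rw [hA0, Matrix.rank_zero] at hrank
    norm_num at hrank
  obtain ⟨u, v, huv⟩ := hedge
  have hAuv : A u v = 1 := by rw [hA01]; simp [huv]
  have hAvu : A v u = 1 := by rw [hA01]; simp [huv.symm]
  have hAuu : A u u = 0 := by rw [hA01]; simp [H.irrefl]
  have hAvv : A v v = 0 := by rw [hA01]; simp [H.irrefl]
  -- rows span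
  have hind : LinearIndependent ℝ ![A u, A v] := by
    rw [LinearIndependent.pair_iff]
    intro a b hab
    have h1 := congrFun hab v
    have h2 := congrFun hab u
    simp only [Pi.add_apply, Pi.smul_apply, smul_eq_mul, Pi.zero_apply] at h1 h2
    rw [hAuv, hAvv] at h1
    rw [hAuu, hAvu] at h2
    constructor
    · linarith
    · linarith
  have hrangepair : Set.range ![A u, A v] = {A u, A v} := by
    ext x
    simp only [Set.mem_range, Fin.exists_fin_two, Set.mem_insert_iff, Set.mem_singleton_iff]
    constructor
    · rintro (h | h) <;> simp [← h]
    · rintro (h | h)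
      · exact Or.inl (by simp [h])
      · exact Or.inr (by simp [h])
  have hfr2 : Module.finrank ℝ (Submodule.span ℝ ({A u, A v} : Set (V → ℝ))) = 2 := by
    rw [← hrangepair, finrank_span_eq_card hind]
    simp
  have hsymA : Aᵀ = A := by rw [hAdef]; exact H.transpose_adjMatrix
  have hfrA : Module.finrank ℝ (Submodule.span ℝ (Set.range A)) = 2 := by
    have := Matrix.rank_eq_finrank_span_cols A
    change A.rank = Module.finrank ℝ (Submodule.span ℝ (Set.range Aᵀ)) at this
    rw [hsymA] at this
    rw [← this, hrank]
  have hle : Submodule.span ℝ ({A u, A v} : Set (V → ℝ)) ≤ Submodule.span ℝ (Set.range A) := by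
    apply Submodule.span_le.mpr
    intro x hx
    rcases hx with h | h
    · exact Submodule.subset_span ⟨u, h.symm⟩
    · rw [Set.mem_singleton_iff] at h
      exact Submodule.subset_span ⟨v, h.symm⟩
  have heq : Submodule.span ℝ ({A u, A v} : Set (V → ℝ)) = Submodule.span ℝ (Set.range A) :=
    Submodule.eq_of_le_of_finrank_le hle (by rw [hfrA, hfr2])
  have hcoef : ∀ w x, A w x = A w v * A u x + A w u * A v x := by
    intro w
    have hmemw : A w ∈ Submodule.span ℝ ({A u, A v} : Set (V → ℝ)) := by
      rw [heq]
      exact Submodule.subset_span ⟨w, rfl⟩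
    obtain ⟨a, b, hab⟩ := Submodule.mem_span_pair.mp hmemw
    have h1 := congrFun hab v
    have h2 := congrFun hab u
    simp only [Pi.add_apply, Pi.smul_apply, smul_eq_mul] at h1 h2
    rw [hAuv, hAvv] at h1
    rw [hAuu, hAvu] at h2
    intro x
    have h3 := congrFun hab x
    simp only [Pi.add_apply, Pi.smul_apply, smul_eq_mul] at h3
    rw [← h3]
    have ha' : a = A w v := by linarith
    have hb' : b = A w u := by linarith
    rw [ha', hb']
  -- the partition
  set P : Finset V := Finset.univ.filter (fun w => H.Adj w v) with hPdef
  set Q : Finset V := Finset.univ.filter (fun w => H.Adj w u) with hQdef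
  have hmemP : ∀ w, w ∈ P ↔ H.Adj w v := by intro w; simp [hPdef]
  have hmemQ : ∀ w, w ∈ Q ↔ H.Adj w u := by intro w; simp [hQdef]
  have hdisj : Disjoint P Q := by
    rw [Finset.disjoint_left]
    intro w hwP hwQ
    exact htf u v w huv ((hmemP w).mp hwP).symm ((hmemQ w).mp hwQ)
  have hiff : ∀ w x, H.Adj w x ↔ (w ∈ P ∧ x ∈ Q) ∨ (w ∈ Q ∧ x ∈ P) := by
    intro w x
    have e := hcoef w x
    rw [hmemP, hmemQ, hmemP, hmemQ]
    have hux : A u x = if H.Adj x u then (1:ℝ) else 0 := by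
      rw [hA01]; simp [SimpleGraph.adj_comm]
    have hvx : A v x = if H.Adj x v then (1:ℝ) else 0 := by
      rw [hA01]; simp [SimpleGraph.adj_comm]
    rw [hA01 w x, hA01 w v, hA01 w u, hux, hvx] at e
    by_cases h1 : H.Adj w v <;> by_cases h2 : H.Adj w u <;>
      by_cases h3 : H.Adj x u <;> by_cases h4 : H.Adj x v <;>
      by_cases h5 : H.Adj w x <;>
      simp only [h1, h2, h3, h4, h5, if_true, if_false, one_mul, zero_mul, mul_one, mul_zero,
        add_zero, zero_add, true_and, and_true, false_and, and_false, or_false, false_or,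
        iff_true, iff_false, or_self, not_or, not_and, not_false_iff, not_true] at e ⊢ <;>
      first
        | exact (htf u v w huv h1.symm h2).elim
        | exact (htf u v x huv h4.symm h3).elim
        | norm_num at e
        | trivial
  refine ⟨P, Q, hdisj, hiff, ?_⟩
  -- charpoly comparison
  set uu : V → ℝ := fun w => if w ∈ P then (1:ℝ) else 0 with huu
  set vv : V → ℝ := fun w => if w ∈ Q then (1:ℝ) else 0 with hvv
  have hdot0 : uu ⬝ᵥ vv = 0 := by
    apply Finset.sum_eq_zero
    intro i _
    by_cases h : i ∈ P
    · have : i ∉ Q := fun hq => (Finset.disjoint_left.mp hdisj h) hq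
      simp [huu, hvv, h, this]
    · simp [huu, h]
  have hindsq : ∀ (S : Finset V), (fun w => if w ∈ S then (1:ℝ) else 0) ⬝ᵥ
      (fun w => if w ∈ S then (1:ℝ) else 0) = (S.card : ℝ) := by
    intro S
    rw [dotProduct]
    have h1 : ∀ i, (if i ∈ S then (1:ℝ) else 0) * (if i ∈ S then (1:ℝ) else 0)
        = if i ∈ S then (1:ℝ) else 0 := fun i => by by_cases h : i ∈ S <;> simp [h]
    rw [Finset.sum_congr rfl (fun i _ => h1 i), Finset.sum_boole]
    congr 1
    simp
  have hdotP : uu ⬝ᵥ uu = (P.card : ℝ) := hindsq P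
  have hdotQ : vv ⬝ᵥ vv = (Q.card : ℝ) := hindsq Q
  have hPQ : ∀ w, w ∈ P → w ∈ Q → False := fun w hp hq =>
    Finset.disjoint_left.mp hdisj hp hq
  have hAform : A = Matrix.of fun i j => uu i * vv j + vv i * uu j := by
    ext i j
    rw [hA01]
    simp only [Matrix.of_apply]
    by_cases hiP : i ∈ P <;> by_cases hiQ : i ∈ Q <;>
      by_cases hjP : j ∈ P <;> by_cases hjQ : j ∈ Q <;>
      first
        | exact (hPQ _ hiP hiQ).elim
        | exact (hPQ _ hjP hjQ).elim
        | simp [huu, hvv, hiP, hiQ, hjP, hjQ, hiff i j]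
  have hcp2 := charpoly_rank2 uu vv hdot0 hn
  rw [← hAform, hcp, hdotP, hdotQ] at hcp2
  have h2 := sub_right_inj.mp hcp2
  have hXn : (X:ℝ[X]) ^ (n - 2) ≠ 0 := pow_ne_zero _ X_ne_zero
  have h3 := mul_right_cancel₀ hXn h2
  have h4 : (N:ℝ) = (P.card : ℝ) * (Q.card : ℝ) := C_inj.mp h3
  exact_mod_cast h4.symm

end Struct

-- charpoly of the complete bipartite graph
lemma cbg_charpoly (a b : ℕ) (h : 2 ≤ a + b) :
    ((completeBipartiteGraph (Fin a) (Fin b)).adjMatrix ℝ).charpoly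
      = X ^ (a + b) - C ((a * b : ℕ) : ℝ) * X ^ (a + b - 2) := by
  classical
  have hcard : Fintype.card (Fin a ⊕ Fin b) = a + b := by simp
  set u : Fin a ⊕ Fin b → ℝ := Sum.elim (fun _ => 1) (fun _ => 0) with hu
  set v : Fin a ⊕ Fin b → ℝ := Sum.elim (fun _ => 0) (fun _ => 1) with hv
  have hA : (completeBipartiteGraph (Fin a) (Fin b)).adjMatrix ℝ
      = Matrix.of fun i j => u i * v j + v i * u j := by
    ext i j
    cases i <;> cases j <;>
      simp [SimpleGraph.adjMatrix_apply, hu, hv]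
  have huv : u ⬝ᵥ v = 0 := by
    rw [dotProduct]
    apply Finset.sum_eq_zero
    intro i _
    cases i <;> simp [hu, hv]
  have huu : u ⬝ᵥ u = ((a : ℕ) : ℝ) := by
    rw [dotProduct, Fintype.sum_sum_type]
    simp [hu]
  have hvv : v ⬝ᵥ v = ((b : ℕ) : ℝ) := by
    rw [dotProduct, Fintype.sum_sum_type]
    simp [hv]
  have key := charpoly_rank2 u v huv (by rw [hcard]; exact h)
  rw [← hA, hcard, huu, hvv] at key
  rw [key]
  norm_num
lemma iso_of_partition {V : Type} [Fintype V] [DecidableEq V] (H : SimpleGraph V)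
    (P Q : Finset V) (hdisj : Disjoint P Q) (huniv : ∀ w, w ∈ P ∨ w ∈ Q)
    (hadj : ∀ w x, H.Adj w x ↔ (w ∈ P ∧ x ∈ Q) ∨ (w ∈ Q ∧ x ∈ P))
    (p q : ℕ) (hP : P.card = p) (hQ : Q.card = q) :
    Nonempty (H ≃g completeBipartiteGraph (Fin p) (Fin q)) := by
  classical
  have hnot : ∀ w, w ∈ Q ↔ w ∉ P := fun w =>
    ⟨fun hq hp => Finset.disjoint_left.mp hdisj hp hq,
     fun hnp => (huniv w).resolve_left hnp⟩
  let eP : {x // x ∈ P} ≃ Fin p := Fintype.equivFinOfCardEq (by rw [Fintype.card_coe]; exact hP)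
  let eQ : {x // x ∈ Q} ≃ Fin q := Fintype.equivFinOfCardEq (by rw [Fintype.card_coe]; exact hQ)
  let e : V ≃ ({x // x ∈ P} ⊕ {x // x ∈ Q}) :=
    { toFun := fun w =>
        if h : w ∈ P then Sum.inl ⟨w, h⟩ else Sum.inr ⟨w, (huniv w).resolve_left h⟩
      invFun := Sum.elim (fun x => x.1) (fun x => x.1)
      left_inv := fun w => by by_cases h : w ∈ P <;> simp [h]
      right_inv := fun x => by
        cases x with
        | inl y => simp [y.2]
        | inr y =>
          have : y.1 ∉ P := (hnot y.1).mp y.2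
          simp [this] }
  refine ⟨⟨e.trans (Equiv.sumCongr eP eQ), ?_⟩⟩
  intro x y
  simp only [Equiv.trans_apply, Equiv.sumCongr_apply]
  rw [hadj x y]
  by_cases hx : x ∈ P <;> by_cases hy : y ∈ P <;>
    simp [e, hx, hy, completeBipartiteGraph, Sum.map, hnot, (hnot x).mpr, (hnot y).mpr]

def shiftedGraph (n p q : ℕ) : SimpleGraph (Fin n) where
  Adj i j := ((i:ℕ) < p ∧ p ≤ (j:ℕ) ∧ (j:ℕ) < p + q) ∨ ((j:ℕ) < p ∧ p ≤ (i:ℕ) ∧ (i:ℕ) < p + q)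
  symm := ⟨fun i j h => h.symm⟩
  loopless := ⟨fun i h => by rcases h with ⟨h1, h2, _⟩ | ⟨h1, h2, _⟩ <;> omega⟩

instance shiftedGraph.decidableRelAdj {n p q : ℕ} : DecidableRel (shiftedGraph n p q).Adj :=
  fun i j => inferInstanceAs (Decidable (_ ∨ _))

lemma shifted_charpoly (n p q : ℕ) (h2 : 2 ≤ n) (hpq : p + q ≤ n) :
    ((shiftedGraph n p q).adjMatrix ℝ).charpoly
      = X ^ n - C ((p * q : ℕ) : ℝ) * X ^ (n - 2) := by
  classical
  have hcard : Fintype.card (Fin n) = n := by simp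
  set u : Fin n → ℝ := fun i => if (i:ℕ) < p then 1 else 0 with hu
  set v : Fin n → ℝ := fun i => if p ≤ (i:ℕ) ∧ (i:ℕ) < p + q then 1 else 0 with hv
  have hA : (shiftedGraph n p q).adjMatrix ℝ
      = Matrix.of fun i j => u i * v j + v i * u j := by
    ext i j
    simp only [SimpleGraph.adjMatrix_apply, Matrix.of_apply, hu, hv]
    by_cases h1 : (i:ℕ) < p <;> by_cases h2' : p ≤ (i:ℕ) ∧ (i:ℕ) < p + q <;>
      by_cases h3 : (j:ℕ) < p <;> by_cases h4 : p ≤ (j:ℕ) ∧ (j:ℕ) < p + q <;>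
      simp only [shiftedGraph] <;>
      first
        | (exfalso; omega)
        | simp [h1, h2', h3, h4]
        | (simp [h1, h2', h3, h4]; norm_num)
  have huv : u ⬝ᵥ v = 0 := by
    rw [dotProduct]
    apply Finset.sum_eq_zero
    intro i _
    by_cases h : (i:ℕ) < p
    · have : ¬ (p ≤ (i:ℕ) ∧ (i:ℕ) < p + q) := by omega
      simp [hu, hv, h, this]
    · simp [hu, h]
  have huu : u ⬝ᵥ u = ((p : ℕ) : ℝ) := by
    rw [dotProduct]
    have h1 : ∀ i : Fin n, u i * u i = (fun k : ℕ => if k < p then (1:ℝ) else 0) (i:ℕ) := by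
      intro i; by_cases h : (i:ℕ) < p <;> simp [hu, h]
    rw [Finset.sum_congr rfl fun i _ => h1 i,
      Fin.sum_univ_eq_sum_range (fun k => if k < p then (1:ℝ) else 0) n, Finset.sum_boole]
    have : (Finset.range n).filter (fun k => k < p) = Finset.range p := by
      ext k; simp; omega
    rw [this, Finset.card_range]
  have hvv : v ⬝ᵥ v = ((q : ℕ) : ℝ) := by
    rw [dotProduct]
    have h1 : ∀ i : Fin n, v i * v i
        = (fun k : ℕ => if p ≤ k ∧ k < p + q then (1:ℝ) else 0) (i:ℕ) := by
      intro i; by_cases h : p ≤ (i:ℕ) ∧ (i:ℕ) < p + q <;> simp [hv, h]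
    rw [Finset.sum_congr rfl fun i _ => h1 i,
      Fin.sum_univ_eq_sum_range (fun k => if p ≤ k ∧ k < p + q then (1:ℝ) else 0) n,
      Finset.sum_boole]
    have : (Finset.range n).filter (fun k => p ≤ k ∧ k < p + q) = Finset.Ico p (p + q) := by
      ext k; simp; omega
    rw [this, Nat.card_Ico]
    congr 1
    omega
  have key := charpoly_rank2 u v huv (by rw [hcard]; exact h2)
  rw [← hA, hcard, huu, hvv] at key
  rw [key]
  norm_num

lemma not_DS {p q a b : ℕ} (hp : 1 ≤ p) (hq : 1 ≤ q) (hab : a * b = p * q)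
    (hlt : p + q < a + b) : ¬ CompleteBipartiteDS a b := by
  intro hDS
  have hab1 : 1 ≤ a * b := by
    rw [hab]
    exact Nat.mul_pos hp hq
  have ha : 1 ≤ a := by
    rcases Nat.eq_zero_or_pos a with h | h
    · subst h; simp at hab1
    · exact h
  have hb : 1 ≤ b := by
    rcases Nat.eq_zero_or_pos b with h | h
    · subst h; simp at hab1
    · exact h
  set n := a + b with hn
  have h2n : 2 ≤ n := by omega
  have hcosp : ((shiftedGraph n p q).adjMatrix ℝ).charpoly
      = ((completeBipartiteGraph (Fin a) (Fin b)).adjMatrix ℝ).charpoly := by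
    rw [shifted_charpoly n p q h2n (by omega), cbg_charpoly a b h2n, hab]
  obtain ⟨f⟩ := hDS (Fin n) inferInstance inferInstance (shiftedGraph n p q)
    inferInstance hcosp
  -- the vertex p+q is isolated in the shifted graph
  have hw : p + q < n := hlt
  set w : Fin n := ⟨p + q, hw⟩ with hwdef
  have hwval : (w:ℕ) = p + q := rfl
  have hiso : ∀ x, ¬ (shiftedGraph n p q).Adj w x := by
    intro x hx
    rcases hx with ⟨h1, _, _⟩ | ⟨_, _, h3⟩ <;> omega
  -- but every vertex of K_{a,b} has a neighbour
  have : ∃ y, (completeBipartiteGraph (Fin a) (Fin b)).Adj (f w) y := by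
    cases hfw : f w with
    | inl x => exact ⟨Sum.inr ⟨0, hb⟩, by simp [completeBipartiteGraph]⟩
    | inr x => exact ⟨Sum.inl ⟨0, ha⟩, by simp [completeBipartiteGraph]⟩
  obtain ⟨y, hy⟩ := this
  have : (shiftedGraph n p q).Adj w (f.symm y) := by
    apply f.map_rel_iff.mp
    rwa [f.apply_symm_apply y]
  exact hiso _ this

lemma pair_unique {p q a b : ℕ} (hpq : p ≤ q) (hab : a ≤ b) (hprod : a * b = p * q)
    (hsum : a + b = p + q) : a = p ∧ b = q := by
  have hprod' : (a:ℤ) * b = (p:ℤ) * q := by exact_mod_cast hprod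
  have hsum' : (a:ℤ) + b = (p:ℤ) + q := by exact_mod_cast hsum
  have hz : ((a:ℤ) - p) * ((a:ℤ) - q) = 0 := by linear_combination (a:ℤ) * hsum' - hprod'
  rcases mul_eq_zero.mp hz with h | h
  · have : a = p := by omega
    omega
  · have : a = q := by omega
    omega

lemma DS_min {N p q : ℕ} (hN : 1 ≤ N) (hpq : p * q = N) (hple : p ≤ q)
    (hmin : ∀ a b : ℕ, a * b = N → p + q ≤ a + b) : CompleteBipartiteDS p q := by
  intro V _ _ H _ hchar
  classical
  have hp1 : 1 ≤ p := by
    rcases Nat.eq_zero_or_pos p with h | h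
    · subst h; simp at hpq; omega
    · exact h
  have hq1 : 1 ≤ q := by omega
  have h2n : 2 ≤ p + q := by omega
  have hK := cbg_charpoly p q h2n
  have hcardV : Fintype.card V = p + q := by
    have h := congrArg Polynomial.natDegree hchar
    rw [Matrix.charpoly_natDegree_eq_dim, Matrix.charpoly_natDegree_eq_dim] at h
    simpa using h
  have hcp : (H.adjMatrix ℝ).charpoly
      = X ^ Fintype.card V - C (N:ℝ) * X ^ (Fintype.card V - 2) := by
    rw [hchar, hK, hcardV, ← hpq]
  obtain ⟨P, Q, hdisj, hiff, hcardN⟩ :=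
    structure_of_charpoly H N hN (by omega) hcp
  have hsum_le : P.card + Q.card ≤ p + q := by
    have h1 : (P ∪ Q).card = P.card + Q.card := Finset.card_union_of_disjoint hdisj
    have h2 : (P ∪ Q).card ≤ Fintype.card V := Finset.card_le_univ _
    omega
  have hsum_ge : p + q ≤ P.card + Q.card := hmin P.card Q.card hcardN
  have hsum_eq : P.card + Q.card = p + q := le_antisymm hsum_le hsum_ge
  have huniv : ∀ w, w ∈ P ∨ w ∈ Q := by
    have hU : P ∪ Q = Finset.univ := by
      apply Finset.eq_univ_of_card
      rw [Finset.card_union_of_disjoint hdisj, hsum_eq, hcardV]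
    intro w
    have : w ∈ P ∪ Q := by rw [hU]; exact Finset.mem_univ w
    exact Finset.mem_union.mp this
  rcases le_total P.card Q.card with hle | hle
  · obtain ⟨h1, h2⟩ := pair_unique hple hle (by rw [hcardN, hpq]) hsum_eq
    exact iso_of_partition H P Q hdisj huniv hiff p q h1 h2
  · obtain ⟨h1, h2⟩ := pair_unique hple hle (by rw [mul_comm, hcardN, hpq])
      (by omega)
    exact iso_of_partition H Q P hdisj.symm (fun w => (huniv w).symm)
      (fun w x => (hiff w x).trans (or_comm)) p q h1 h2

/-- For every `N ≥ 1` there is exactly one pair `(p, q)` with `p ≤ q` and `p * q = N`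
such that the complete bipartite graph `K_{p,q}` is determined by its adjacency
spectrum. -/
theorem exists_unique_DS_completeBipartiteGraph (N : ℕ) (hN : 1 ≤ N) :
    ∃ p q : ℕ, p ≤ q ∧ p * q = N ∧ CompleteBipartiteDS p q ∧
      ∀ a b : ℕ, a ≤ b → a * b = N → (a, b) ≠ (p, q) → ¬ CompleteBipartiteDS a b := by
  classical
  have hex : ∃ s : ℕ, ∃ a b : ℕ, a * b = N ∧ a + b = s := ⟨1 + N, 1, N, by simp, rfl⟩
  set s₀ := Nat.find hex with hs₀
  obtain ⟨a₀, b₀, hprod₀, hsum₀⟩ := Nat.find_spec hex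
  set p := min a₀ b₀ with hp
  set q := max a₀ b₀ with hq
  have hpq : p * q = N := by
    rcases le_total a₀ b₀ with h | h
    · rw [hp, hq, min_eq_left h, max_eq_right h]; exact hprod₀
    · rw [hp, hq, min_eq_right h, max_eq_left h, mul_comm]; exact hprod₀
  have hsum : p + q = s₀ := by
    rw [hp, hq]
    rcases le_total a₀ b₀ with h | h <;>
      simp [min_eq_left, min_eq_right, max_eq_right, max_eq_left, h] <;> omega
  have hple : p ≤ q := min_le_max
  have hmin : ∀ a b : ℕ, a * b = N → p + q ≤ a + b := by
    intro a b h
    rw [hsum]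
    exact Nat.find_le ⟨a, b, h, rfl⟩
  have hp1 : 1 ≤ p := by
    rcases Nat.eq_zero_or_pos p with h | h
    · rw [h] at hpq; simp at hpq; omega
    · exact h
  have hq1 : 1 ≤ q := le_trans hp1 hple
  refine ⟨p, q, hple, hpq, DS_min hN hpq hple hmin, ?_⟩
  intro a b hab habN hne
  have hlt : p + q < a + b := by
    rcases lt_or_eq_of_le (hmin a b habN) with h | h
    · exact h
    · exfalso
      obtain ⟨h1, h2⟩ := pair_unique hple hab (by rw [habN, hpq]) h.symm
      exact hne (by rw [h1, h2])
  exact not_DS hp1 hq1 (by rw [habN, hpq]) hlt
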